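/- arXiv:2112.00572 — 6 statements merged into one kernel-verified Lean document; each statement's English description precedes it below -/
import Mathlib

section
/- Let A be an algebra with a submultiplicative norm ‖·‖ and δ : A → A a derivation. Define recursively ‖a‖_0 = ‖a‖ and ‖a‖_{M+1} = ‖a‖_M + ‖δ(a)‖_M. Then each ‖·‖_M is a submultiplicative norm on A. -/
/-- The recursively defined M-norms: `‖a‖₀ = n a`, `‖a‖_{M+1} = ‖a‖_M + ‖δ a‖_M`. -/
def MNorm {A : Type*} (n : A → ℝ) (δ : A → A) : ℕ → A → ℝ
  | 0, a => n a
  | M + 1, a => MNorm n δ M a + MNorm n δ M (δ a)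

/-- Let `A` be a (not necessarily unital) algebra over `ℂ` with a submultiplicative
norm `n`, and `δ : A → A` a derivation.  Then each M-norm `‖·‖_M` is again a
submultiplicative norm on `A`. -/
theorem mnorm_is_submultiplicative_norm {A : Type*} [NonUnitalRing A] [Module ℂ A]
    [SMulCommClass ℂ A A] [IsScalarTower ℂ A A]
    (n : A → ℝ)
    (hnonneg : ∀ a, 0 ≤ n a)
    (hzero : ∀ a, n a = 0 ↔ a = 0)
    (htri : ∀ a b, n (a + b) ≤ n a + n b)
    (hhomog : ∀ (c : ℂ) (a : A), n (c • a) = ‖c‖ * n a)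
    (hsubmul : ∀ a b, n (a * b) ≤ n a * n b)
    (δ : A →ₗ[ℂ] A)
    (hleibniz : ∀ a b, δ (a * b) = a * δ b + δ a * b) :
    ∀ M : ℕ,
      (∀ a, 0 ≤ MNorm n (⇑δ) M a) ∧
      (∀ a, MNorm n (⇑δ) M a = 0 ↔ a = 0) ∧
      (∀ a b, MNorm n (⇑δ) M (a + b) ≤ MNorm n (⇑δ) M a + MNorm n (⇑δ) M b) ∧
      (∀ (c : ℂ) (a : A), MNorm n (⇑δ) M (c • a) = ‖c‖ * MNorm n (⇑δ) M a) ∧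
      (∀ a b, MNorm n (⇑δ) M (a * b) ≤ MNorm n (⇑δ) M a * MNorm n (⇑δ) M b) := by
  intro M
  induction M with
  | zero =>
    exact ⟨hnonneg, hzero, htri, hhomog, hsubmul⟩
  | succ M ih =>
    obtain ⟨ihnn, ihz, iht, ihh, ihs⟩ := ih
    refine ⟨?_, ?_, ?_, ?_, ?_⟩
    · intro a
      exact add_nonneg (ihnn a) (ihnn (δ a))
    · intro a
      constructor
      · intro h
        simp only [MNorm] at h
        have h1 : MNorm n (⇑δ) M a = 0 :=
          le_antisymm (by nlinarith [ihnn a, ihnn (δ a)]) (ihnn a)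
        exact (ihz a).mp h1
      · intro h
        subst h
        simp [MNorm, (ihz 0).mpr rfl, (ihz (δ 0)).mpr (by simp)]
    · intro a b
      simp only [MNorm, map_add]
      have := iht a b
      have := iht (δ a) (δ b)
      linarith
    · intro c a
      simp only [MNorm, map_smul]
      rw [ihh, ihh]
      ring
    · intro a b
      simp only [MNorm, hleibniz]
      have h1 := ihs a b
      have h2 := iht (a * δ b) (δ a * b)
      have h3 := ihs a (δ b)
      have h4 := ihs (δ a) b
      nlinarith [ihnn (δ a), ihnn (δ b), ihnn a, ihnn b]
end

section
/- If b ∈ A satisfies ‖b‖_M < ∞ for all M and b is invertible with ‖b⁻¹‖ < ∞, then ‖b⁻¹‖_{M+1} ≤ ‖b⁻¹‖_M² · ‖b‖_{M+1} for every M; in particular all M-norms of b⁻¹ are finite. -/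
section Aux

variable {A : Type*} [NormedRing A] [NormedAlgebra ℂ A] (δ : A →ₗ[ℂ] A)

lemma mnorm_nonneg (M : ℕ) (a : A) : 0 ≤ MNorm (fun a => ‖a‖) (⇑δ) M a := by
  induction M generalizing a with
  | zero => exact norm_nonneg a
  | succ M ih => exact add_nonneg (ih a) (ih (δ a))

lemma mnorm_add_le (M : ℕ) (a b : A) :
    MNorm (fun a => ‖a‖) (⇑δ) M (a + b) ≤
      MNorm (fun a => ‖a‖) (⇑δ) M a + MNorm (fun a => ‖a‖) (⇑δ) M b := by
  induction M generalizing a b with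
  | zero => exact norm_add_le a b
  | succ M ih =>
    simp only [MNorm, map_add]
    have h1 := ih a b
    have h2 := ih (δ a) (δ b)
    linarith

lemma mnorm_neg (M : ℕ) (a : A) :
    MNorm (fun a => ‖a‖) (⇑δ) M (-a) = MNorm (fun a => ‖a‖) (⇑δ) M a := by
  induction M generalizing a with
  | zero => exact norm_neg a
  | succ M ih => simp only [MNorm, map_neg, ih]

lemma mnorm_mul_le (hleibniz : ∀ a b, δ (a * b) = a * δ b + δ a * b) (M : ℕ) (a b : A) :
    MNorm (fun a => ‖a‖) (⇑δ) M (a * b) ≤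
      MNorm (fun a => ‖a‖) (⇑δ) M a * MNorm (fun a => ‖a‖) (⇑δ) M b := by
  induction M generalizing a b with
  | zero => exact norm_mul_le a b
  | succ M ih =>
    simp only [MNorm]
    have h1 := ih a b
    have h2 : MNorm (fun a => ‖a‖) (⇑δ) M (δ (a * b)) ≤
        MNorm (fun a => ‖a‖) (⇑δ) M a * MNorm (fun a => ‖a‖) (⇑δ) M (δ b) +
        MNorm (fun a => ‖a‖) (⇑δ) M (δ a) * MNorm (fun a => ‖a‖) (⇑δ) M b := by
      rw [hleibniz]
      calc MNorm (fun a => ‖a‖) (⇑δ) M (a * δ b + δ a * b)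
          ≤ MNorm (fun a => ‖a‖) (⇑δ) M (a * δ b) +
            MNorm (fun a => ‖a‖) (⇑δ) M (δ a * b) := mnorm_add_le δ M _ _
        _ ≤ _ := add_le_add (ih a (δ b)) (ih (δ a) b)
    have h3 : 0 ≤ MNorm (fun a => ‖a‖) (⇑δ) M (δ a) * MNorm (fun a => ‖a‖) (⇑δ) M (δ b) :=
      mul_nonneg (mnorm_nonneg δ M _) (mnorm_nonneg δ M _)
    nlinarith

end Aux

/-- In a unital Banach algebra `A` over `ℂ` with a derivation `δ`, if `b` is invertible
then `‖b⁻¹‖_{M+1} ≤ ‖b⁻¹‖_M ^ 2 · ‖b‖_{M+1}` for every `M` (all M-norms of `b⁻¹` being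
finite real numbers). -/
theorem mnorm_inverse_bound {A : Type*} [NormedRing A] [NormedAlgebra ℂ A]
    [CompleteSpace A]
    (δ : A →ₗ[ℂ] A)
    (hleibniz : ∀ a b, δ (a * b) = a * δ b + δ a * b)
    (b : Aˣ) :
    ∀ M : ℕ,
      MNorm (fun a => ‖a‖) (⇑δ) (M + 1) (↑b⁻¹ : A) ≤
        (MNorm (fun a => ‖a‖) (⇑δ) M (↑b⁻¹ : A)) ^ 2 *
          MNorm (fun a => ‖a‖) (⇑δ) (M + 1) (↑b : A) := by
  intro M
  set N := fun a : A => MNorm (fun a => ‖a‖) (⇑δ) M a with hN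
  have hδ1 : δ (1 : A) = 0 := by
    have h := hleibniz 1 1
    simp only [one_mul, mul_one] at h
    have : δ (1 : A) = δ 1 + δ 1 := h
    have := left_eq_add.mp this
    exact this
  have h1 : δ ((↑b⁻¹ : A) * ↑b) = 0 := by rw [Units.inv_mul]; exact hδ1
  have h2 : (↑b⁻¹ : A) * δ ↑b + δ ↑b⁻¹ * ↑b = 0 := by rw [← hleibniz]; exact h1
  have hinv : δ (↑b⁻¹ : A) = -((↑b⁻¹ : A) * δ ↑b * ↑b⁻¹) := by
    have h3 : δ (↑b⁻¹ : A) * ↑b = -((↑b⁻¹ : A) * δ ↑b) :=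
      eq_neg_of_add_eq_zero_right h2
    calc δ (↑b⁻¹ : A) = δ (↑b⁻¹ : A) * (↑b * ↑b⁻¹) := by rw [Units.mul_inv, mul_one]
      _ = (δ (↑b⁻¹ : A) * ↑b) * ↑b⁻¹ := by rw [mul_assoc]
      _ = -((↑b⁻¹ : A) * δ ↑b) * ↑b⁻¹ := by rw [h3]
      _ = -((↑b⁻¹ : A) * δ ↑b * ↑b⁻¹) := by rw [neg_mul]
  have hNnn : ∀ a : A, 0 ≤ N a := fun a => mnorm_nonneg δ M a
  have hmul : ∀ a c : A, N (a * c) ≤ N a * N c := fun a c => mnorm_mul_le δ hleibniz M a c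
  have key : ∀ x : A, N ((↑b⁻¹ : A) * x * ↑b⁻¹) ≤ N (↑b⁻¹ : A) ^ 2 * N x := by
    intro x
    calc N ((↑b⁻¹ : A) * x * ↑b⁻¹) ≤ N ((↑b⁻¹ : A) * x) * N (↑b⁻¹ : A) := hmul _ _
      _ ≤ N (↑b⁻¹ : A) * N x * N (↑b⁻¹ : A) :=
          mul_le_mul_of_nonneg_right (hmul _ _) (hNnn _)
      _ = N (↑b⁻¹ : A) ^ 2 * N x := by ring
  have hA : N (↑b⁻¹ : A) ≤ N (↑b⁻¹ : A) ^ 2 * N (↑b : A) := by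
    have : ((↑b⁻¹ : A) * ↑b * ↑b⁻¹) = (↑b⁻¹ : A) := by
      rw [Units.inv_mul, one_mul]
    calc N (↑b⁻¹ : A) = N ((↑b⁻¹ : A) * ↑b * ↑b⁻¹) := by rw [this]
      _ ≤ _ := key ↑b
  have hB : N (δ (↑b⁻¹ : A)) ≤ N (↑b⁻¹ : A) ^ 2 * N (δ (↑b : A)) := by
    rw [hinv]
    show MNorm (fun a => ‖a‖) (⇑δ) M (-(↑b⁻¹ * δ ↑b * ↑b⁻¹)) ≤ _
    rw [mnorm_neg δ M]
    exact key (δ ↑b)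
  show N (↑b⁻¹ : A) + N (δ (↑b⁻¹ : A)) ≤ N (↑b⁻¹ : A) ^ 2 * (N (↑b : A) + N (δ (↑b : A)))
  nlinarith [hA, hB]
end

section
/- Let F : ℤ/Sℤ → ℂ be a locally constant function with mean zero: ∫ F dμ = 0 with respect to Haar measure. Then there exists a locally constant function G : ℤ/Sℤ → ℂ solving the cohomological equation F(x) = G(x + q(1)) − G(x) for all x. -/
open scoped BigOperators

/-- `l` is a (positive, finite) divisor of the supernatural number with exponent
function `ε : ℕ → ℕ∞` (only values at primes are relevant). -/
def SDvd (ε : ℕ → ℕ∞) (l : ℕ) : Prop :=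
  0 < l ∧ ∀ p : ℕ, (l.factorization p : ℕ∞) ≤ ε p

/-- The supernatural number `ε` is infinite: it has infinitely many finite divisors. -/
def SInfinite (ε : ℕ → ℕ∞) : Prop := {l : ℕ | SDvd ε l}.Infinite

/-- The finite divisors of `ε`. -/
abbrev SDivisors (ε : ℕ → ℕ∞) := {l : ℕ // SDvd ε l}

instance (n : ℕ) : TopologicalSpace (ZMod n) := ⊥
instance (n : ℕ) : DiscreteTopology (ZMod n) := ⟨rfl⟩

/-- The profinite ring `ℤ/Sℤ = lim← ℤ/lℤ`, realized as the subring of compatible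
sequences in `Π l | S, ℤ/lℤ`. -/
def ZModSRing (ε : ℕ → ℕ∞) : Subring (Π l : SDivisors ε, ZMod l.1) where
  carrier := {x | ∀ (k l : SDivisors ε) (h : k.1 ∣ l.1),
    ZMod.castHom h (ZMod k.1) (x l) = x k}
  zero_mem' := fun k l h => by simp
  one_mem' := fun k l h => map_one (ZMod.castHom h (ZMod k.1))
  add_mem' := fun {a b} ha hb k l h => by
    simp only [Pi.add_apply, map_add, ha k l h, hb k l h]
  neg_mem' := fun {a} ha k l h => by
    simp only [Pi.neg_apply, map_neg, ha k l h]
  mul_mem' := fun {a b} ha hb k l h => by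
    simp only [Pi.mul_apply, map_mul, ha k l h, hb k l h]

/-- The canonical map `q : ℤ → ℤ/Sℤ`. -/
def qS (ε : ℕ → ℕ∞) (x : ℤ) : ZModSRing ε :=
  ⟨fun l => (x : ZMod l.1), fun k l h => by
    simp only [ZMod.castHom_apply]; exact map_intCast (ZMod.castHom h (ZMod k.1)) x⟩



section Aux
variable {ε : ℕ → ℕ∞}

lemma qS_add (ε : ℕ → ℕ∞) (a b : ℤ) : qS ε (a + b) = qS ε a + qS ε b := by
  refine Subtype.ext (funext fun L => ?_)
  show ((a + b : ℤ) : ZMod L.1) = ((qS ε a + qS ε b : ZModSRing ε) : ∀ i : SDivisors ε, ZMod i.1) L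
  push_cast
  rfl

lemma qS_zero (ε : ℕ → ℕ∞) : qS ε 0 = 0 := by
  refine Subtype.ext (funext fun L => ?_)
  show ((0 : ℤ) : ZMod L.1) = _
  push_cast
  rfl

lemma continuous_addRight (ε : ℕ → ℕ∞) (c : ZModSRing ε) :
    Continuous (fun x : ZModSRing ε => x + c) := by
  have h : Continuous fun x : ZModSRing ε =>
      (fun L : SDivisors ε => (x : ∀ i : SDivisors ε, ZMod i.1) L + (c : ∀ i : SDivisors ε, ZMod i.1) L) :=
    continuous_pi fun L =>
      (continuous_of_discreteTopology
        (f := fun v : ZMod L.1 => v + (c : ∀ i : SDivisors ε, ZMod i.1) L)).comp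
        ((continuous_apply L).comp continuous_subtype_val)
  exact h.subtype_mk _

lemma SDvd.one' : SDvd ε 1 := ⟨one_pos, fun p => by simp⟩

lemma SDvd.lcm' {a b : ℕ} (ha : SDvd ε a) (hb : SDvd ε b) : SDvd ε (Nat.lcm a b) := by
  refine ⟨Nat.pos_of_ne_zero (Nat.lcm_ne_zero ha.1.ne' hb.1.ne'), fun p => ?_⟩
  rw [Nat.factorization_lcm ha.1.ne' hb.1.ne']
  rw [Finsupp.sup_apply]
  rcases le_total (a.factorization p) (b.factorization p) with h | h
  · rw [sup_eq_right.2 h]; exact hb.2 p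
  · rw [sup_eq_left.2 h]; exact ha.2 p

lemma SDvd.finsetLcm (ε : ℕ → ℕ∞) (I : Finset (SDivisors ε)) :
    SDvd ε (I.lcm fun i => i.1) := by
  classical
  induction I using Finset.induction_on with
  | empty => simpa using (SDvd.one' : SDvd ε 1)
  | insert _ _ h ih =>
      rw [Finset.lcm_insert, lcm_eq_nat_lcm]
      exact SDvd.lcm' (by exact _root_.id (Subtype.prop _)) ih

lemma dense_range_qS (ε : ℕ → ℕ∞) : Dense (Set.range (qS ε)) := by
  rw [dense_iff_inter_open]
  rintro U hU ⟨x, hxU⟩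
  obtain ⟨V, hV, rfl⟩ := isOpen_induced_iff.mp hU
  obtain ⟨I, u, hIu, hsub⟩ := isOpen_pi_iff.mp hV x.1 hxU
  have hN : SDvd ε (I.lcm fun i => i.1) := SDvd.finsetLcm ε I
  set N : SDivisors ε := ⟨I.lcm fun i => i.1, hN⟩ with hNdef
  haveI : NeZero N.1 := ⟨hN.1.ne'⟩
  refine ⟨qS ε ((x.1 N).val : ℕ), ?_, ⟨_, rfl⟩⟩
  show (qS ε ((x.1 N).val : ℕ)).1 ∈ V
  apply hsub
  intro i hi
  have hdvd : i.1 ∣ N.1 := Finset.dvd_lcm (Finset.mem_coe.mp hi)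
  have h1 : (qS ε ((x.1 N).val : ℕ)).1 i = x.1 i := by
    have h2 : (((x.1 N).val : ℕ) : ZMod N.1) = x.1 N := ZMod.natCast_rightInverse (x.1 N)
    calc ((((x.1 N).val : ℕ) : ℤ) : ZMod i.1)
        = (((x.1 N).val : ℕ) : ZMod i.1) := by push_cast; rfl
      _ = ZMod.castHom hdvd (ZMod i.1) (((x.1 N).val : ℕ) : ZMod N.1) := (map_natCast _ _).symm
      _ = ZMod.castHom hdvd (ZMod i.1) (x.1 N) := by rw [h2]
      _ = x.1 i := x.2 i N hdvd
  rw [h1]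
  exact (hIu i (Finset.mem_coe.mp hi)).2

lemma isLocallyConstant_finsum {X : Type*} [TopologicalSpace X] (s : Finset ℕ) (f : ℕ → X → ℂ)
    (h : ∀ j ∈ s, IsLocallyConstant (f j)) :
    IsLocallyConstant (fun x => ∑ j ∈ s, f j x) := by
  classical
  induction s using Finset.induction_on with
  | empty => simp only [Finset.sum_empty]; exact IsLocallyConstant.const (0 : ℂ)
  | @insert a s ha ih =>
      simp only [Finset.sum_insert ha]
      exact (h a (Finset.mem_insert_self a s)).add
        (ih fun j hj => h j (Finset.mem_insert_of_mem hj))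

end Aux

/-- Cohomological equation: if `F : ℤ/Sℤ → ℂ` is locally constant (hence `l`-periodic
for some finite divisor `l` of `S`) with zero Haar mean (the average over one period
vanishes), then `F(x) = G(x + q(1)) − G(x)` for some locally constant `G`. -/
theorem coboundary_of_mean_zero (ε : ℕ → ℕ∞) (hinf : SInfinite ε)
    (F : ZModSRing ε → ℂ) (hF : IsLocallyConstant F)
    (l : ℕ) (hl : SDvd ε l)
    (hper : ∀ x : ZModSRing ε, F (x + qS ε (l : ℤ)) = F x)
    (hmean : ∑ k ∈ Finset.range l, F (qS ε (k : ℤ)) = 0) :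
    ∃ G : ZModSRing ε → ℂ, IsLocallyConstant G ∧
      ∀ x : ZModSRing ε, F x = G (x + qS ε 1) - G x := by
  classical
  haveI hlne : NeZero l := ⟨hl.1.ne'⟩
  set L : SDivisors ε := ⟨l, hl⟩ with hLdef
  obtain ⟨m, hm⟩ : ∃ m, l = m + 1 := ⟨l - 1, (Nat.succ_pred_eq_of_pos hl.1).symm⟩
  have coordL : Continuous fun x : ZModSRing ε => x.1 L :=
    (continuous_apply L).comp continuous_subtype_val
  set n : ZModSRing ε → ℕ := fun x => (x.1 L).val with hn
  have hFt : ∀ a : ℤ, IsLocallyConstant fun x : ZModSRing ε => F (x + qS ε a) :=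
    fun a => hF.comp_continuous (continuous_addRight ε _)
  have key : ∀ (x : ZModSRing ε) (a b : ℤ), x + qS ε a + qS ε b = x + qS ε (a + b) := by
    intro x a b; rw [qS_add, ← add_assoc]
  have harg : ∀ (x : ZModSRing ε) {a b : ℤ}, a = b → F (x + qS ε a) = F (x + qS ε b) :=
    fun x a b h => by rw [h]
  have hx0 : ∀ x : ZModSRing ε, x + qS ε 0 = x := fun x => by rw [qS_zero, add_zero]
  have hFper : ∀ (x : ZModSRing ε) (a : ℤ), F (x + qS ε (a + l)) = F (x + qS ε a) := by
    intro x a; rw [← key, hper]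
  -- the "mean over a period" function
  set H : ZModSRing ε → ℂ := fun x => ∑ j ∈ Finset.range l, F (x + qS ε (-(j : ℤ))) with hH
  have Hinv : ∀ x : ZModSRing ε, H (x + qS ε 1) = H x := by
    intro x
    have e1 : ∀ j : ℕ, F (x + qS ε 1 + qS ε (-(j : ℤ))) = F (x + qS ε (1 - (j : ℤ))) := by
      intro j; rw [key, sub_eq_add_neg]
    show ∑ j ∈ Finset.range l, F (x + qS ε 1 + qS ε (-(j : ℤ)))
        = ∑ j ∈ Finset.range l, F (x + qS ε (-(j : ℤ)))
    rw [hm]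
    calc ∑ j ∈ Finset.range (m + 1), F (x + qS ε 1 + qS ε (-(j : ℤ)))
        = ∑ j ∈ Finset.range (m + 1), F (x + qS ε (1 - (j : ℤ))) :=
          Finset.sum_congr rfl fun j _ => e1 j
      _ = ∑ j ∈ Finset.range m, F (x + qS ε (1 - ((j + 1 : ℕ) : ℤ)))
            + F (x + qS ε (1 - ((0 : ℕ) : ℤ))) :=
          Finset.sum_range_succ' (fun j => F (x + qS ε (1 - (j : ℤ)))) m
      _ = ∑ j ∈ Finset.range m, F (x + qS ε (-(j : ℤ))) + F (x + qS ε (-(m : ℤ))) := by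
          congr 1
          · exact Finset.sum_congr rfl fun j _ => harg x (by omega)
          · have h2 : F (x + qS ε (-(m : ℤ) + l)) = F (x + qS ε (-(m : ℤ))) := hFper x _
            rw [← h2]
            exact harg x (by omega)
      _ = ∑ j ∈ Finset.range (m + 1), F (x + qS ε (-(j : ℤ))) :=
          (Finset.sum_range_succ (fun j => F (x + qS ε (-(j : ℤ)))) m).symm
  have Horb : ∀ a : ℤ, H (qS ε a) = H (qS ε 0) := by
    intro a
    induction a using Int.induction_on with
    | zero => rfl
    | succ i ih =>
        have h3 := Hinv (qS ε i)
        rw [← qS_add] at h3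
        exact h3.trans ih
    | pred i ih =>
        have h3 := Hinv (qS ε (-(i : ℤ) - 1))
        rw [← qS_add] at h3
        have h4 : (-(i : ℤ) - 1 + 1) = -(i : ℤ) := by ring
        rw [h4] at h3
        exact h3.symm.trans ih
  have Hm0 : H (qS ε (m : ℤ)) = 0 := by
    have e4 : ∀ j ∈ Finset.range l, F (qS ε (m : ℤ) + qS ε (-(j : ℤ)))
        = F (qS ε ((m - j : ℕ) : ℤ)) := by
      intro j hj
      have hj' : j ≤ m := by
        rw [hm] at hj; exact Nat.lt_succ_iff.mp (Finset.mem_range.mp hj)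
      rw [← qS_add]
      have h5 : ((m : ℤ) + -(j : ℤ)) = ((m - j : ℕ) : ℤ) := by omega
      rw [h5]
    calc H (qS ε (m : ℤ))
        = ∑ j ∈ Finset.range l, F (qS ε ((m - j : ℕ) : ℤ)) := Finset.sum_congr rfl e4
      _ = ∑ j ∈ Finset.range l, F (qS ε ((j : ℕ) : ℤ)) := by
          rw [hm]
          have := Finset.sum_range_reflect (fun j => F (qS ε (j : ℤ))) (m + 1)
          simpa using this
      _ = 0 := hmean
  have Hz : ∀ x : ZModSRing ε, H x = 0 := by
    have HLC : IsLocallyConstant H :=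
      isLocallyConstant_finsum (Finset.range l) (fun j x => F (x + qS ε (-(j : ℤ))))
        (fun j _ => hFt _)
    have heq : H = fun _ => (0 : ℂ) := by
      refine Continuous.ext_on (dense_range_qS ε) HLC.continuous continuous_const ?_
      rintro _ ⟨a, rfl⟩
      exact (Horb a).trans ((Horb m).symm.trans Hm0)
    exact fun x => congrFun heq x
  have hnx : ∀ x : ZModSRing ε, n x < l := fun x => ZMod.val_lt _
  have hcoord : ∀ x : ZModSRing ε, (x + qS ε 1 : ZModSRing ε).1 L = x.1 L + 1 := by
    intro x
    show x.1 L + ((1 : ℤ) : ZMod L.1) = x.1 L + 1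
    rw [Int.cast_one]
  have hnsucc : ∀ x : ZModSRing ε, n (x + qS ε 1) = (n x + 1) % l := by
    intro x
    have h1 : ((n x : ℕ) : ZMod L.1) = x.1 L := ZMod.natCast_rightInverse _
    calc ((x + qS ε 1 : ZModSRing ε).1 L).val = (x.1 L + 1).val := by rw [hcoord x]
      _ = (((n x + 1 : ℕ) : ZMod L.1)).val := by rw [← h1, ← Nat.cast_add_one]
      _ = (n x + 1) % l := ZMod.val_natCast _ _
  set G : ZModSRing ε → ℂ := fun x => ∑ j ∈ Finset.range (n x), F (x + qS ε (-((j : ℤ) + 1)))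
    with hG
  have hGlc : IsLocallyConstant G := by
    rw [IsLocallyConstant.iff_exists_open]
    intro x
    refine ⟨((fun y : ZModSRing ε => y.1 L) ⁻¹' {x.1 L}) ∩
        ⋂ j ∈ Finset.range l,
          {y : ZModSRing ε | F (y + qS ε (-((j : ℤ) + 1))) = F (x + qS ε (-((j : ℤ) + 1)))},
        ?_, ⟨rfl, ?_⟩, ?_⟩
    · exact ((isOpen_discrete _).preimage coordL).inter
        (isOpen_biInter_finset fun j _ => (hFt _).isOpen_fiber _)
    · simp only [Set.mem_iInter]; intro j hj; rfl
    · rintro y ⟨hy1, hy2⟩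
      simp only [Set.mem_iInter] at hy2
      have hny : n y = n x := congrArg ZMod.val hy1
      show ∑ j ∈ Finset.range (n y), F (y + qS ε (-((j : ℤ) + 1)))
          = ∑ j ∈ Finset.range (n x), F (x + qS ε (-((j : ℤ) + 1)))
      rw [hny]
      exact Finset.sum_congr rfl fun j hj =>
        hy2 j (Finset.mem_range.mpr ((Finset.mem_range.mp hj).trans (hnx x)))
  refine ⟨G, hGlc, fun x => ?_⟩
  have e2 : ∀ j : ℕ, F (x + qS ε 1 + qS ε (-((j : ℤ) + 1))) = F (x + qS ε (-(j : ℤ))) := by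
    intro j; rw [key]; exact harg x (by ring)
  have hsplit : ∀ N : ℕ, ∑ j ∈ Finset.range (N + 1), F (x + qS ε (-(j : ℤ)))
      = ∑ j ∈ Finset.range N, F (x + qS ε (-((j : ℤ) + 1))) + F x := by
    intro N
    have hA : ∑ j ∈ Finset.range N, F (x + qS ε (-((j + 1 : ℕ) : ℤ)))
        = ∑ j ∈ Finset.range N, F (x + qS ε (-((j : ℤ) + 1))) :=
      Finset.sum_congr rfl fun j _ => harg x (by omega)
    have hB : F (x + qS ε (-((0 : ℕ) : ℤ))) = F x := by
      rw [show (-((0 : ℕ) : ℤ)) = 0 from by omega, hx0]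
    calc ∑ j ∈ Finset.range (N + 1), F (x + qS ε (-(j : ℤ)))
        = ∑ j ∈ Finset.range N, F (x + qS ε (-((j + 1 : ℕ) : ℤ)))
            + F (x + qS ε (-((0 : ℕ) : ℤ))) :=
          Finset.sum_range_succ' (fun j => F (x + qS ε (-(j : ℤ)))) N
      _ = ∑ j ∈ Finset.range N, F (x + qS ε (-((j : ℤ) + 1))) + F x :=
          congrArg₂ (· + ·) hA hB
  by_cases hcase : n x + 1 = l
  · have hn1 : n (x + qS ε 1) = 0 := by rw [hnsucc, hcase, Nat.mod_self]
    have hG1 : G (x + qS ε 1) = 0 := by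
      show ∑ j ∈ Finset.range (n (x + qS ε 1)), _ = (0 : ℂ)
      rw [hn1]; simp
    have hHx : H x = G x + F x := by
      show ∑ j ∈ Finset.range l, F (x + qS ε (-(j : ℤ))) = _
      rw [← hcase, hsplit (n x)]
    rw [hG1, zero_sub]
    have h6 : F x + G x = 0 := by rw [add_comm, ← hHx]; exact Hz x
    exact eq_neg_of_add_eq_zero_left h6
  · have hlt : n x + 1 < l := lt_of_le_of_ne (Nat.succ_le_of_lt (hnx x)) hcase
    have hn1 : n (x + qS ε 1) = n x + 1 := by rw [hnsucc, Nat.mod_eq_of_lt hlt]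
    have hG2 : G (x + qS ε 1) = F x + G x := by
      show ∑ j ∈ Finset.range (n (x + qS ε 1)), F (x + qS ε 1 + qS ε (-((j : ℤ) + 1))) = _
      rw [hn1]
      calc ∑ j ∈ Finset.range (n x + 1), F (x + qS ε 1 + qS ε (-((j : ℤ) + 1)))
          = ∑ j ∈ Finset.range (n x + 1), F (x + qS ε (-(j : ℤ))) :=
            Finset.sum_congr rfl fun j _ => e2 j
        _ = ∑ j ∈ Finset.range (n x), F (x + qS ε (-((j : ℤ) + 1))) + F x := hsplit (n x)
        _ = F x + G x := by rw [add_comm]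
    rw [hG2]; ring
end

section
/- Define, for a function φ : {(l,k) : l | S, 0 ≤ k < l} → ℤ in the class Φ (satisfying the compatibility φ(l,k) = ∑_{j=0}^{(l'/l)−1} φ(l', k+jl) whenever l | l' | S), the quantity Rφ(l,l') = ∑_{a=1}^{(l'/l)−1} ∑_{j=0}^{al−1} φ(l',j). Then for finite divisors l | l' of S: Rφ(1,l') − Rφ(1,l) = l · Rφ(l,l'). Consequently Rφ(1,l) ≡ Rφ(1,l') mod l. -/
open scoped BigOperators

/-- The class `Φ`: integer-valued functions `φ(l,k)` (for `l | S` finite, `0 ≤ k < l`)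
satisfying the refinement compatibility `φ(l,k) = ∑_{j<l'/l} φ(l', k + j·l)` for `l | l'`. -/
def InPhi (ε : ℕ → ℕ∞) (φ : ℕ → ℕ → ℤ) : Prop :=
  ∀ l l' : ℕ, SDvd ε l' → l ∣ l' → ∀ k : ℕ, k < l →
    φ l k = ∑ j ∈ Finset.range (l' / l), φ l' (k + j * l)

/-- `Rφ(l,l') = ∑_{a=1}^{(l'/l)−1} ∑_{j=0}^{a·l−1} φ(l',j)` (empty sums are zero). -/
def Rphi (φ : ℕ → ℕ → ℤ) (l l' : ℕ) : ℤ :=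
  ∑ a ∈ Finset.Ico 1 (l' / l), ∑ j ∈ Finset.range (a * l), φ l' j


private lemma sum_Ico_one' (n : ℕ) (f : ℕ → ℤ) (h0 : f 0 = 0) :
    ∑ a ∈ Finset.Ico 1 n, f a = ∑ a ∈ Finset.range n, f a := by
  rw [Finset.range_eq_Ico]
  rcases Nat.eq_zero_or_pos n with h | h
  · simp [h]
  · rw [Finset.sum_eq_sum_Ico_succ_bot h, h0, zero_add]

private lemma sum_range_mul' (f : ℕ → ℤ) (m l : ℕ) :
    ∑ n ∈ Finset.range (m * l), f n
      = ∑ j ∈ Finset.range m, ∑ a ∈ Finset.range l, f (j * l + a) := by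
  induction m with
  | zero => simp
  | succ m ih =>
    rw [Nat.succ_mul, Finset.sum_range_add, ih, Finset.sum_range_succ]

/-- For `φ ∈ Φ` and finite divisors `l | l'` of `S`:
`Rφ(1,l') − Rφ(1,l) = l · Rφ(l,l')`, and consequently `Rφ(1,l) ≡ Rφ(1,l') (mod l)`. -/
theorem Rphi_consistency (ε : ℕ → ℕ∞) (φ : ℕ → ℕ → ℤ) (hφ : InPhi ε φ)
    (l l' : ℕ) (hl' : SDvd ε l') (hdvd : l ∣ l') (hl : 0 < l) :
    Rphi φ 1 l' - Rphi φ 1 l = (l : ℤ) * Rphi φ l l' ∧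
    Rphi φ 1 l ≡ Rphi φ 1 l' [ZMOD (l : ℤ)] := by
  classical
  set m := l' / l with hm
  have hml : m * l = l' := Nat.div_mul_cancel hdvd
  have hl'pos : 0 < l' := hl'.1
  set F : ℕ → ℤ := fun n => ∑ j ∈ Finset.range n, φ l' j with hF
  have hF0 : F 0 = 0 := by simp [hF]
  have hFadd : ∀ a b : ℕ, F (a + b) = F a + ∑ k ∈ Finset.range b, φ l' (a + k) := by
    intro a b; simp [hF, Finset.sum_range_add]
  have h1 : Rphi φ 1 l' = ∑ a ∈ Finset.range l', F a := by
    rw [Rphi]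
    simp only [Nat.div_one, mul_one]
    exact sum_Ico_one' l' F hF0
  have hRll' : Rphi φ l l' = ∑ j ∈ Finset.range m, F (j * l) := by
    rw [Rphi, ← hm]
    exact sum_Ico_one' m (fun a => F (a * l)) (by simp [hF0])
  have key : ∀ k, k < l → φ l k = ∑ j ∈ Finset.range m, φ l' (k + j * l) :=
    hφ l l' hl' hdvd
  have h2 : Rphi φ 1 l
      = (∑ a ∈ Finset.range l', F a) - (l : ℤ) * ∑ j ∈ Finset.range m, F (j * l) := by
    rw [Rphi]
    simp only [Nat.div_one, mul_one]
    rw [sum_Ico_one' l (fun a => ∑ j ∈ Finset.range a, φ l j) (by simp)]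
    have step : ∀ a ∈ Finset.range l, ∑ k ∈ Finset.range a, φ l k
        = ∑ j ∈ Finset.range m, (F (j * l + a) - F (j * l)) := by
      intro a ha
      rw [Finset.mem_range] at ha
      calc ∑ k ∈ Finset.range a, φ l k
          = ∑ k ∈ Finset.range a, ∑ j ∈ Finset.range m, φ l' (k + j * l) := by
            refine Finset.sum_congr rfl fun k hk => ?_
            exact key k (lt_trans (Finset.mem_range.mp hk) ha)
        _ = ∑ j ∈ Finset.range m, ∑ k ∈ Finset.range a, φ l' (j * l + k) := by
            rw [Finset.sum_comm]
            refine Finset.sum_congr rfl fun j _ => Finset.sum_congr rfl fun k _ => ?_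
            rw [Nat.add_comm]
        _ = ∑ j ∈ Finset.range m, (F (j * l + a) - F (j * l)) := by
            refine Finset.sum_congr rfl fun j _ => ?_
            rw [hFadd (j * l) a]; ring
    rw [Finset.sum_congr rfl step, Finset.sum_comm]
    have : ∀ j ∈ Finset.range m,
        ∑ a ∈ Finset.range l, (F (j * l + a) - F (j * l))
          = (∑ a ∈ Finset.range l, F (j * l + a)) - (l : ℤ) * F (j * l) := by
      intro j _
      rw [Finset.sum_sub_distrib, Finset.sum_const, Finset.card_range,
        nsmul_eq_mul]
    rw [Finset.sum_congr rfl this, Finset.sum_sub_distrib, ← Finset.mul_sum,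
      ← sum_range_mul' F m l, hml]
  constructor
  · rw [h1, h2, hRll']; ring
  · have hdiff : Rphi φ 1 l' - Rphi φ 1 l = (l : ℤ) * Rphi φ l l' := by
      rw [h1, h2, hRll']; ring
    exact (Int.modEq_iff_dvd.mpr ⟨Rphi φ l l', hdiff⟩)
end

section
/- With Φ and R as above, the map ρ : Φ → ℤ/Sℤ, ρ(φ) = (Rφ(1,l) mod l)_{l|S}, is a well-defined surjective group homomorphism onto the profinite group ℤ/Sℤ = lim← ℤ/lℤ. -/
open scoped BigOperators

private lemma sum_range_weighted (f : ℕ → ℤ) (n : ℕ) :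
    ∑ a ∈ Finset.range n, ∑ j ∈ Finset.range a, f j
      = ∑ j ∈ Finset.range n, ((n : ℤ) - 1 - j) * f j := by
  induction n with
  | zero => simp
  | succ n ih =>
    rw [Finset.sum_range_succ, ih, Finset.sum_range_succ, ← Finset.sum_add_distrib]
    push_cast
    rw [show ((n : ℤ) + 1 - 1 - n) * f n = 0 by ring, add_zero]
    exact Finset.sum_congr rfl fun j _ => by ring

private lemma Rphi_one (φ : ℕ → ℕ → ℤ) (n : ℕ) :
    Rphi φ 1 n = ∑ j ∈ Finset.range n, ((n : ℤ) - 1 - j) * φ n j := by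
  rw [← sum_range_weighted]
  unfold Rphi
  simp only [Nat.div_one, mul_one]
  rcases Nat.eq_zero_or_pos n with h | h
  · simp [h]
  · rw [Finset.range_eq_Ico, Finset.sum_eq_sum_Ico_succ_bot h]
    simp

private lemma sum_range_mul'_s18 {M : Type*} [AddCommMonoid M] (g : ℕ → M) (t k : ℕ) :
    ∑ j ∈ Finset.range (t * k), g j
      = ∑ q ∈ Finset.range t, ∑ m ∈ Finset.range k, g (q * k + m) := by
  induction t with
  | zero => simp
  | succ t ih =>
    rw [Finset.sum_range_succ, ← ih, Nat.succ_mul, Finset.sum_range_add]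

private lemma mem_ZModSRing_iff (ε : ℕ → ℕ∞) (z : Π l : SDivisors ε, ZMod l.1) :
    z ∈ ZModSRing ε ↔ ∀ (k l : SDivisors ε) (h : k.1 ∣ l.1),
      ZMod.castHom h (ZMod k.1) (z l) = z k := Iff.rfl

private lemma Rphi_cast (ε : ℕ → ℕ∞) (φ : ℕ → ℕ → ℤ) (hφ : InPhi ε φ)
    {k n : ℕ} (hn : SDvd ε n) (h : k ∣ n) :
    ((Rphi φ 1 n : ℤ) : ZMod k) = ((Rphi φ 1 k : ℤ) : ZMod k) := by
  have hkn : n / k * k = n := Nat.div_mul_cancel h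
  rw [Rphi_one, Rphi_one]
  push_cast
  rw [show Finset.range n = Finset.range (n / k * k) from by rw [hkn],
    sum_range_mul'_s18, Finset.sum_comm]
  have hn0 : ((n : ℕ) : ZMod k) = 0 := (ZMod.natCast_eq_zero_iff n k).2 h
  have hk0 : ((k : ℕ) : ZMod k) = 0 := ZMod.natCast_self k
  refine Finset.sum_congr rfl fun m hm => ?_
  have hkey : φ k m = ∑ q ∈ Finset.range (n / k), φ n (m + q * k) :=
    hφ k n hn h m (Finset.mem_range.mp hm)
  rw [hkey]
  push_cast
  rw [hn0, hk0, Finset.mul_sum]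
  refine Finset.sum_congr rfl fun q _ => ?_
  rw [Nat.add_comm m (q * k)]
  ring


/-- The map `ρ : Φ → ℤ/Sℤ`, `ρ(φ) = (Rφ(1,l) mod l)_{l|S}`, is well defined (it lands
in the inverse limit), additive, and surjective onto the profinite group `ℤ/Sℤ`. -/
theorem rho_welldefined_additive_surjective (ε : ℕ → ℕ∞) (hinf : SInfinite ε) :
    (∀ φ : ℕ → ℕ → ℤ, InPhi ε φ →
      (fun l : SDivisors ε => ((Rphi φ 1 l.1 : ℤ) : ZMod l.1)) ∈ ZModSRing ε) ∧
    (∀ φ ψ : ℕ → ℕ → ℤ, InPhi ε φ → InPhi ε ψ →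
      (fun l : SDivisors ε => ((Rphi (φ + ψ) 1 l.1 : ℤ) : ZMod l.1)) =
        (fun l : SDivisors ε => ((Rphi φ 1 l.1 : ℤ) : ZMod l.1)) +
          (fun l : SDivisors ε => ((Rphi ψ 1 l.1 : ℤ) : ZMod l.1))) ∧
    (∀ x : ZModSRing ε, ∃ φ : ℕ → ℕ → ℤ, InPhi ε φ ∧
      ∀ l : SDivisors ε, ((Rphi φ 1 l.1 : ℤ) : ZMod l.1) = x.1 l) := by
  classical
  refine ⟨?_, ?_, ?_⟩
  · -- well-definedness
    intro φ hφ
    rw [mem_ZModSRing_iff]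
    intro k l h
    simp only [map_intCast]
    exact Rphi_cast ε φ hφ l.2 h
  · -- additivity
    intro φ ψ hφ hψ
    funext l
    have hadd : Rphi (φ + ψ) 1 l.1 = Rphi φ 1 l.1 + Rphi ψ 1 l.1 := by
      unfold Rphi
      rw [← Finset.sum_add_distrib]
      refine Finset.sum_congr rfl fun a _ => ?_
      rw [← Finset.sum_add_distrib]
      exact Finset.sum_congr rfl fun j _ => rfl
    simp only [Pi.add_apply, hadd, Int.cast_add]
  · -- surjectivity
    intro x
    set y : ZModSRing ε := -x - 1 with hy
    have hy2 := (mem_ZModSRing_iff ε y.1).mp y.2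
    set φ₀ : ℕ → ℕ → ℤ := fun n j => if h : SDvd ε n then
        (if j < n ∧ y.1 ⟨n, h⟩ = (j : ZMod n) then 1 else 0) else 0 with hφ₀
    refine ⟨φ₀, ?_, ?_⟩
    · -- φ₀ ∈ Φ
      intro l l' hl' hdl m hm
      have hl'0 : 0 < l' := hl'.1
      have hl0 : 0 < l := Nat.pos_of_dvd_of_pos hdl hl'0
      have hl : SDvd ε l := by
        refine ⟨hl0, fun p => ?_⟩
        refine le_trans ?_ (hl'.2 p)
        have hle := (Nat.factorization_le_iff_dvd hl0.ne' hl'0.ne').2 hdl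
        exact_mod_cast Nat.cast_le.mpr (hle p)
      haveI : NeZero l' := ⟨hl'0.ne'⟩
      haveI : NeZero l := ⟨hl0.ne'⟩
      set v := (y.1 ⟨l', hl'⟩).val with hv
      have hvlt : v < l' := ZMod.val_lt _
      have hcast : ((v : ℕ) : ZMod l') = y.1 ⟨l', hl'⟩ := by
        rw [hv, ZMod.natCast_val, ZMod.cast_id]
      have hyl : y.1 ⟨l, hl⟩ = ((v : ℕ) : ZMod l) := by
        rw [← hy2 ⟨l, hl⟩ ⟨l', hl'⟩ hdl, ← hcast, map_natCast]
      have hterm : ∀ j ∈ Finset.range (l' / l),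
          φ₀ l' (m + j * l) = if j = v / l ∧ m = v % l then (1 : ℤ) else 0 := by
        intro j hj
        have hj' : j < l' / l := Finset.mem_range.mp hj
        have hlt : m + j * l < l' := by
          have h1 : (j + 1) * l ≤ l' / l * l := Nat.mul_le_mul_right _ hj'
          rw [Nat.div_mul_cancel hdl] at h1
          have : m + j * l < (j + 1) * l := by nlinarith
          omega
        have hiff : (y.1 ⟨l', hl'⟩ = ((m + j * l : ℕ) : ZMod l'))
            ↔ (j = v / l ∧ m = v % l) := by
          constructor
          · intro hEq
            have hval : ((m + j * l : ℕ) : ZMod l').val = m + j * l :=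
              ZMod.val_cast_of_lt hlt
            have hvm : v = m + j * l := by rw [hv, hEq, hval]
            have hmod : v % l = m := by
              rw [hvm, Nat.add_mul_mod_self_right, Nat.mod_eq_of_lt hm]
            have hdiv : v / l = j := by
              rw [hvm, Nat.add_mul_div_right _ _ hl0, Nat.div_eq_of_lt hm, Nat.zero_add]
            exact ⟨hdiv.symm, hmod.symm⟩
          · rintro ⟨hjv, hmv⟩
            rw [hjv, hmv, ← hcast]
            rw [show v % l + v / l * l = v from Nat.mod_add_div' v l]
        rw [hφ₀]
        simp only [dif_pos hl', hlt, true_and, hiff]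
      rw [Finset.sum_congr rfl hterm]
      by_cases hmv : m = v % l
      · subst hmv
        have hmem : v / l ∈ Finset.range (l' / l) :=
          Finset.mem_range.mpr (Nat.div_lt_div_of_lt_of_dvd hdl hvlt)
        rw [hφ₀]
        simp only [dif_pos hl]
        rw [if_pos ⟨hm, by rw [hyl]; exact (ZMod.natCast_mod v l).symm⟩]
        simp [Finset.sum_ite_eq' (Finset.range (l' / l)) (v / l) (fun _ => (1 : ℤ)), hmem]
      · simp only [hmv, and_false, if_false, Finset.sum_const_zero]
        rw [hφ₀]
        simp only [dif_pos hl]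
        rw [if_neg]
        rintro ⟨-, hEq⟩
        apply hmv
        have h2 : ((v : ℕ) : ZMod l) = ((m : ℕ) : ZMod l) := by rw [← hyl, hEq]
        have h3 := congrArg ZMod.val h2
        rw [ZMod.val_natCast, ZMod.val_natCast, Nat.mod_eq_of_lt hm] at h3
        omega
    · -- ρ(φ₀) = x
      intro l
      obtain ⟨n, hn⟩ := l
      haveI : NeZero n := ⟨hn.1.ne'⟩
      set v := (y.1 ⟨n, hn⟩).val with hv
      have hvlt : v < n := ZMod.val_lt _
      have hcast : ((v : ℕ) : ZMod n) = y.1 ⟨n, hn⟩ := by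
        rw [hv, ZMod.natCast_val, ZMod.cast_id]
      have hφn : ∀ j ∈ Finset.range n, ((n : ℤ) - 1 - j) * φ₀ n j
          = ((n : ℤ) - 1 - j) * (if j = v then 1 else 0) := by
        intro j hj
        have hj' : j < n := Finset.mem_range.mp hj
        have hiff : (y.1 ⟨n, hn⟩ = ((j : ℕ) : ZMod n)) ↔ j = v := by
          rw [← hcast]
          constructor
          · intro hEq
            have := congrArg ZMod.val hEq
            rw [ZMod.val_cast_of_lt hvlt, ZMod.val_cast_of_lt hj'] at this
            omega
          · rintro rfl; rfl
        rw [hφ₀]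
        simp only [dif_pos hn, hj', true_and, hiff]
      rw [Rphi_one, Finset.sum_congr rfl hφn]
      have hsum : ∑ j ∈ Finset.range n, ((n : ℤ) - 1 - j) * (if j = v then 1 else 0)
          = (n : ℤ) - 1 - v := by
        simp only [mul_ite, mul_one, mul_zero]
        rw [Finset.sum_ite_eq' (Finset.range n) v, if_pos (Finset.mem_range.mpr hvlt)]
      rw [hsum]
      have hyx : y.1 ⟨n, hn⟩ = -x.1 ⟨n, hn⟩ - 1 := by rw [hy]; rfl
      push_cast
      rw [ZMod.natCast_self, hcast, hyx]
      ring
end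

section
/- Let δ be the automorphism-twisted difference on Φ given by ((1−β*)ψ)(l,k) = ψ(l,k) − ψ(l, (k+1) mod l). Then for φ = (1−β*)ψ one has Rφ(1,l) = l·ψ(l,0) − ψ(1,0) for every finite divisor l of S; in particular Rφ(1,l) ≡ −ψ(1,0) mod l for all l, so ρ(φ) lies in the canonical copy of ℤ inside ℤ/Sℤ. -/
open scoped BigOperators

/-- The twisted difference `(1 − β*)ψ` of `ψ ∈ Φ`: `φ(l,k) = ψ(l,k) − ψ(l,(k+1) mod l)`. -/
def deltaPhi (ψ : ℕ → ℕ → ℤ) : ℕ → ℕ → ℤ := fun l k => ψ l k - ψ l ((k + 1) % l)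

/-- For `φ = (1 − β*)ψ`: `Rφ(1,l) = l·ψ(l,0) − ψ(1,0)` for every finite divisor `l` of
`S`; in particular `Rφ(1,l) ≡ −ψ(1,0) (mod l)` for all `l`, so `ρ(φ)` lies in the
canonical copy of `ℤ` inside `ℤ/Sℤ` (it equals `q(−ψ(1,0))`). -/
theorem Rphi_of_coboundary (ε : ℕ → ℕ∞) (ψ : ℕ → ℕ → ℤ) (hψ : InPhi ε ψ) :
    (∀ l : ℕ, SDvd ε l → Rphi (deltaPhi ψ) 1 l = (l : ℤ) * ψ l 0 - ψ 1 0) ∧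
    (∀ l : ℕ, SDvd ε l → Rphi (deltaPhi ψ) 1 l ≡ -ψ 1 0 [ZMOD (l : ℤ)]) ∧
    (fun l : SDivisors ε => ((Rphi (deltaPhi ψ) 1 l.1 : ℤ) : ZMod l.1)) =
      (qS ε (-(ψ 1 0))).1 := by
  have key : ∀ l : ℕ, SDvd ε l → Rphi (deltaPhi ψ) 1 l = (l : ℤ) * ψ l 0 - ψ 1 0 := by
    intro l hl
    have hlpos := hl.1
    have h1 : ψ 1 0 = ∑ j ∈ Finset.range (l / 1), ψ l (0 + j * 1) :=
      hψ 1 l hl (one_dvd l) 0 one_pos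
    simp only [Nat.div_one, zero_add, mul_one] at h1
    have hsplit : ∑ j ∈ Finset.range l, ψ l j = ψ l 0 + ∑ a ∈ Finset.Ico 1 l, ψ l a := by
      rw [Finset.range_eq_Ico, Finset.sum_eq_sum_Ico_succ_bot hlpos]
    unfold Rphi
    simp only [Nat.div_one, mul_one]
    have hinner : ∀ a ∈ Finset.Ico 1 l,
        ∑ j ∈ Finset.range a, deltaPhi ψ l j = ψ l 0 - ψ l a := by
      intro a ha
      obtain ⟨ha1, hal⟩ := Finset.mem_Ico.mp ha
      have hc : ∀ j ∈ Finset.range a, deltaPhi ψ l j = ψ l j - ψ l (j + 1) := by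
        intro j hj
        have hj' := Finset.mem_range.mp hj
        unfold deltaPhi
        rw [Nat.mod_eq_of_lt (by omega)]
      rw [Finset.sum_congr rfl hc, Finset.sum_range_sub' (fun j => ψ l j)]
    rw [Finset.sum_congr rfl hinner, Finset.sum_sub_distrib, Finset.sum_const,
      Nat.card_Ico]
    have : ∑ a ∈ Finset.Ico 1 l, ψ l a = ψ 1 0 - ψ l 0 := by omega
    rw [this]
    have : ((l - 1 : ℕ) : ℤ) = (l : ℤ) - 1 := by
      have : 1 ≤ l := hlpos
      push_cast [this]; ring
    rw [nsmul_eq_mul, this]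
    ring
  refine ⟨key, ?_, ?_⟩
  · intro l hl
    rw [key l hl]
    have : ((l : ℤ) * ψ l 0 - ψ 1 0) - (-ψ 1 0) = (l : ℤ) * ψ l 0 := by ring
    exact Int.ModEq.symm (Int.modEq_iff_dvd.mpr (by rw [this]; exact Dvd.intro _ rfl))
  · funext l
    have h := key l.1 l.2
    show ((Rphi (deltaPhi ψ) 1 l.1 : ℤ) : ZMod l.1) = ((-(ψ 1 0) : ℤ) : ZMod l.1)
    rw [h]
    push_cast
    simp [ZMod.natCast_self]
end
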